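/- Let Θ₁ be symmetric positive definite and Γ symmetric with λ_min(Θ₁) > ‖Γ‖₂, so that Θ₁ + vΓ is positive definite for all v ∈ [0,1]. Then A := vec(Γ)ᵀ (∫₀¹ (1−v)(Θ₁+vΓ)⁻¹ ⊗ (Θ₁+vΓ)⁻¹ dv) vec(Γ) satisfies A ≥ ‖Γ‖_F² · λ_min(Θ₁⁻¹)² / (2·(1 + λ_min(Θ₁⁻¹)·‖Γ‖₂)²). -/

import Mathlib

open Matrix Kronecker

noncomputable def frobNorm {p q : ℕ} (M : Matrix (Fin p) (Fin q) ℝ) : ℝ :=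
  Real.sqrt (∑ i, ∑ j, (M i j)^2)

noncomputable def opNorm {p q : ℕ} (M : Matrix (Fin p) (Fin q) ℝ) : ℝ :=
  ‖(Matrix.toEuclideanLin M).toContinuousLinearMap‖

noncomputable def lamMin {p : ℕ} (hp : 0 < p) {M : Matrix (Fin p) (Fin p) ℝ}
    (hM : M.IsHermitian) : ℝ :=
  Finset.univ.inf' (Finset.univ_nonempty_iff.mpr ⟨⟨0, hp⟩⟩) hM.eigenvalues

/-- `A = vec(Γ)ᵀ (∫₀¹ (1−v)(Θ₁+vΓ)⁻¹ ⊗ (Θ₁+vΓ)⁻¹ dv) vec(Γ)`, with the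
integral pulled to the scalar level. -/
noncomputable def kronQuadForm {p : ℕ} (Θ₁ Γ : Matrix (Fin p) (Fin p) ℝ) : ℝ :=
  ∫ v in (0:ℝ)..1, (1 - v) *
    ((fun ij : Fin p × Fin p => Γ ij.1 ij.2) ⬝ᵥ
      (((Θ₁ + v • Γ)⁻¹ ⊗ₖ (Θ₁ + v • Γ)⁻¹).mulVec
        fun ij : Fin p × Fin p => Γ ij.1 ij.2))

section Aux
variable {p : ℕ}

lemma aux_herm_transpose {M : Matrix (Fin p) (Fin p) ℝ} (h : M.IsHermitian) : Mᵀ = M := by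
  ext i j
  rw [Matrix.transpose_apply]
  conv_rhs => rw [← h]
  simp [Matrix.conjTranspose_apply]

lemma quad_form_eq (M : Matrix (Fin p) (Fin p) ℝ) (hM : M.IsHermitian) (x : Fin p → ℝ) :
    x ⬝ᵥ M *ᵥ x = ∑ i, hM.eigenvalues i *
      ((star (hM.eigenvectorUnitary : Matrix (Fin p) (Fin p) ℝ) *ᵥ x) i)^2 := by
  set U : Matrix (Fin p) (Fin p) ℝ := (hM.eigenvectorUnitary : Matrix (Fin p) (Fin p) ℝ) with hU
  set y := star U *ᵥ x with hy
  have hstar : star U = Uᵀ := by ext i j; simp [Matrix.star_apply]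
  have hxU : x ᵥ* U = y := by rw [hy, hstar, ← Matrix.vecMul_transpose, Matrix.transpose_transpose]
  have hdiag : Matrix.diagonal (RCLike.ofReal ∘ hM.eigenvalues) = Matrix.diagonal hM.eigenvalues := by
    congr 1
  have h1 : x ⬝ᵥ M *ᵥ x = y ⬝ᵥ (Matrix.diagonal hM.eigenvalues *ᵥ y) := by
    conv_lhs => rw [hM.spectral_theorem, Unitary.conjStarAlgAut_apply]
    rw [← Matrix.mulVec_mulVec, ← Matrix.mulVec_mulVec, Matrix.dotProduct_mulVec, hxU, hdiag]
  rw [h1]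
  simp [Matrix.mulVec_diagonal, dotProduct]
  exact Finset.sum_congr rfl fun i _ => by ring

lemma xx_eq (M : Matrix (Fin p) (Fin p) ℝ) (hM : M.IsHermitian) (x : Fin p → ℝ) :
    x ⬝ᵥ x = ∑ i, ((star (hM.eigenvectorUnitary : Matrix (Fin p) (Fin p) ℝ) *ᵥ x) i)^2 := by
  set U : Matrix (Fin p) (Fin p) ℝ := (hM.eigenvectorUnitary : Matrix (Fin p) (Fin p) ℝ) with hU
  set y := star U *ᵥ x with hy
  have hstar : star U = Uᵀ := by ext i j; simp [Matrix.star_apply]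
  have hxU : x ᵥ* U = y := by rw [hy, hstar, ← Matrix.vecMul_transpose, Matrix.transpose_transpose]
  have h1 : y ⬝ᵥ y = x ⬝ᵥ x := by
    conv_lhs => rw [hy]
    rw [Matrix.dotProduct_mulVec, hstar, Matrix.vecMul_transpose, Matrix.mulVec_mulVec, ← hstar,
      (Matrix.mem_unitaryGroup_iff.mp hM.eigenvectorUnitary.2), Matrix.one_mulVec]
  rw [← h1]
  simp [dotProduct, pow_two]

lemma aux_quad_ge (M : Matrix (Fin p) (Fin p) ℝ) (hM : M.IsHermitian) (x : Fin p → ℝ)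
    {c : ℝ} (hc : ∀ i, c ≤ hM.eigenvalues i) :
    c * (x ⬝ᵥ x) ≤ x ⬝ᵥ M *ᵥ x := by
  rw [quad_form_eq M hM x, xx_eq M hM x, Finset.mul_sum]
  exact Finset.sum_le_sum fun i _ => mul_le_mul_of_nonneg_right (hc i) (sq_nonneg _)

lemma aux_quad_le (M : Matrix (Fin p) (Fin p) ℝ) (hM : M.IsHermitian) (x : Fin p → ℝ)
    {c : ℝ} (hc : ∀ i, hM.eigenvalues i ≤ c) :
    x ⬝ᵥ M *ᵥ x ≤ c * (x ⬝ᵥ x) := by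
  rw [quad_form_eq M hM x, xx_eq M hM x, Finset.mul_sum]
  exact Finset.sum_le_sum fun i _ => mul_le_mul_of_nonneg_right (hc i) (sq_nonneg _)

lemma abs_quad_le_opNorm (Γ : Matrix (Fin p) (Fin p) ℝ) (x : Fin p → ℝ) :
    |x ⬝ᵥ Γ *ᵥ x| ≤ opNorm Γ * (x ⬝ᵥ x) := by
  set X : EuclideanSpace ℝ (Fin p) := (WithLp.equiv 2 (Fin p → ℝ)).symm x with hX
  set T := (Matrix.toEuclideanLin Γ).toContinuousLinearMap with hT
  have h1 : x ⬝ᵥ Γ *ᵥ x = inner ℝ X (T X) := by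
    rw [EuclideanSpace.inner_eq_star_dotProduct]
    simp [hT, hX, Matrix.toEuclideanLin_apply]
    exact dotProduct_comm _ _
  have h2 : x ⬝ᵥ x = ‖X‖ ^ 2 := by
    rw [← real_inner_self_eq_norm_sq, EuclideanSpace.inner_eq_star_dotProduct]
    simp [hX]
  rw [h1, h2]
  calc |inner ℝ X (T X)| ≤ ‖X‖ * ‖T X‖ := abs_real_inner_le_norm X (T X)
    _ ≤ ‖X‖ * (‖T‖ * ‖X‖) := mul_le_mul_of_nonneg_left (T.le_opNorm X) (norm_nonneg X)
    _ = opNorm Γ * ‖X‖ ^ 2 := by rw [opNorm]; ring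

lemma aux_xx_nonneg (x : Fin p → ℝ) : 0 ≤ x ⬝ᵥ x := by
  simp only [dotProduct]
  exact Finset.sum_nonneg fun i _ => mul_self_nonneg _

end Aux

section Aux2

variable {p : ℕ}

lemma aux_xx_nonneg' (x : Fin p → ℝ) : 0 ≤ x ⬝ᵥ x := by
  simp only [dotProduct]
  exact Finset.sum_nonneg fun i _ => mul_self_nonneg _

-- eigenvalue upper bound from quadratic form bound
lemma aux_eigen_le (M : Matrix (Fin p) (Fin p) ℝ) (hM : M.IsHermitian) {β : ℝ}
    (h : ∀ x : Fin p → ℝ, x ⬝ᵥ M *ᵥ x ≤ β * (x ⬝ᵥ x)) (i : Fin p) :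
    hM.eigenvalues i ≤ β := by
  set u : Fin p → ℝ := ⇑(hM.eigenvectorBasis i) with hu
  have huu : u ⬝ᵥ u = 1 := by
    have hnorm : ‖hM.eigenvectorBasis i‖ = 1 := hM.eigenvectorBasis.orthonormal.1 i
    have : (u ⬝ᵥ u) = ‖hM.eigenvectorBasis i‖ ^ 2 := by
      rw [← real_inner_self_eq_norm_sq, EuclideanSpace.inner_eq_star_dotProduct]
      simp [hu]
    rw [this, hnorm, one_pow]
  have heq : hM.eigenvalues i = u ⬝ᵥ M *ᵥ u := by
    rw [hM.eigenvalues_eq i]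
    simp [hu]
  rw [heq]
  calc u ⬝ᵥ M *ᵥ u ≤ β * (u ⬝ᵥ u) := h u
    _ = β := by rw [huu, mul_one]

-- quadratic form of Θ bounded above by inverse of min eigenvalue of Θ⁻¹
lemma aux_inv_bound (hp : 0 < p) (Θ : Matrix (Fin p) (Fin p) ℝ) (hΘ : Θ.PosDef)
    (hinv : (Θ⁻¹).IsHermitian) (x : Fin p → ℝ) :
    x ⬝ᵥ Θ *ᵥ x ≤ (lamMin hp hinv)⁻¹ * (x ⬝ᵥ x) := by
  set m := lamMin hp hinv with hm
  have hm0 : 0 < m := by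
    rw [hm, lamMin]
    apply Finset.lt_inf'_iff _ |>.mpr
    intro i _
    exact hΘ.inv.eigenvalues_pos i
  set w := Θ *ᵥ x with hw
  have hge : ∀ y : Fin p → ℝ, m * (y ⬝ᵥ y) ≤ y ⬝ᵥ Θ⁻¹ *ᵥ y := by
    intro y
    refine aux_quad_ge Θ⁻¹ hinv y fun i => ?_
    exact Finset.inf'_le _ (Finset.mem_univ i)
  have h1 : m * (w ⬝ᵥ w) ≤ x ⬝ᵥ w := by
    have h2 := hge w
    have h3 : w ⬝ᵥ Θ⁻¹ *ᵥ w = x ⬝ᵥ w := by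
      rw [hw, Matrix.mulVec_mulVec, Matrix.nonsing_inv_mul Θ hΘ.det_pos.ne'.isUnit,
        Matrix.one_mulVec, dotProduct_comm]
    rw [h3] at h2; exact h2
  have hcs : (x ⬝ᵥ w) ^ 2 ≤ (x ⬝ᵥ x) * (w ⬝ᵥ w) := by
    simpa [dotProduct, pow_two] using
      Finset.sum_mul_sq_le_sq_mul_sq Finset.univ x w
  have hX : 0 ≤ x ⬝ᵥ x := aux_xx_nonneg' x
  have hW : 0 ≤ w ⬝ᵥ w := aux_xx_nonneg' w
  have hq0 : 0 ≤ x ⬝ᵥ w := le_trans (by positivity) h1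
  rcases eq_or_lt_of_le hq0 with hq | hq
  · rw [← hq]; positivity
  · have hkey : m * (x ⬝ᵥ w) ≤ x ⬝ᵥ x := by
      nlinarith [mul_le_mul_of_nonneg_left h1 hX, mul_le_mul_of_nonneg_left hcs hm0.le, hq]
    rw [inv_mul_eq_div, le_div_iff₀ hm0, mul_comm]
    exact hkey

end Aux2

section Aux3
variable {p : ℕ}

lemma kron_quad (A Γ : Matrix (Fin p) (Fin p) ℝ) :
    ((fun ij : Fin p × Fin p => Γ ij.1 ij.2) ⬝ᵥ
      ((A ⊗ₖ A).mulVec fun ij : Fin p × Fin p => Γ ij.1 ij.2))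
    = Matrix.trace (Γᵀ * (A * Γ * Aᵀ)) := by
  simp only [dotProduct, Matrix.mulVec, Matrix.trace, Matrix.diag,
    Matrix.mul_apply, Matrix.kroneckerMap_apply, Fintype.sum_prod_type,
    Matrix.transpose_apply, Finset.mul_sum, Finset.sum_mul]
  rw [Finset.sum_comm]
  refine Finset.sum_congr rfl fun i₁ _ => ?_
  refine Finset.sum_congr rfl fun a _ => ?_
  conv_rhs => rw [Finset.sum_comm]
  exact Finset.sum_congr rfl fun b _ => Finset.sum_congr rfl fun c _ => by ring

lemma sq_sum_eq_trace (M : Matrix (Fin p) (Fin p) ℝ) :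
    ∑ i, ∑ j, (M i j)^2 = Matrix.trace (Mᵀ * M) := by
  simp only [Matrix.trace, Matrix.diag, Matrix.mul_apply, Matrix.transpose_apply, pow_two]
  rw [Finset.sum_comm]

lemma trace_diag_form (C : Matrix (Fin p) (Fin p) ℝ) (e : Fin p → ℝ) :
    Matrix.trace ((Cᵀ * Matrix.diagonal e) * (C * Matrix.diagonal e))
      = ∑ i, ∑ j, e i * e j * (C i j)^2 := by
  simp only [Matrix.trace, Matrix.diag, Matrix.mul_apply, Matrix.transpose_apply,
    Matrix.diagonal_apply, Finset.sum_mul, Finset.mul_sum, mul_ite, ite_mul, zero_mul, mul_zero,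
    Finset.sum_ite_eq', Finset.mem_univ, if_true]
  rw [Finset.sum_comm]
  exact Finset.sum_congr rfl fun i _ => Finset.sum_congr rfl fun j _ => by ring

lemma key_ineq (B Γ : Matrix (Fin p) (Fin p) ℝ) (hB : B.PosDef) (hΓt : Γᵀ = Γ)
    {β : ℝ} (hβ : 0 < β) (hev : ∀ i, hB.1.eigenvalues i ≤ β) :
    β⁻¹ * β⁻¹ * (∑ i, ∑ j, (Γ i j)^2) ≤
      ((fun ij : Fin p × Fin p => Γ ij.1 ij.2) ⬝ᵥ
        ((B⁻¹ ⊗ₖ B⁻¹).mulVec fun ij : Fin p × Fin p => Γ ij.1 ij.2)) := by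
  set d := hB.1.eigenvalues with hd
  set e : Fin p → ℝ := fun i => (d i)⁻¹ with he
  set U : Matrix (Fin p) (Fin p) ℝ := (hB.1.eigenvectorUnitary : Matrix (Fin p) (Fin p) ℝ) with hU
  have hstar : star U = Uᵀ := by ext i j; simp [Matrix.star_apply]
  have hUU : U * star U = 1 := Matrix.mem_unitaryGroup_iff.mp hB.1.eigenvectorUnitary.2
  have hU'U : star U * U = 1 := Matrix.mem_unitaryGroup_iff'.mp hB.1.eigenvectorUnitary.2
  have hdpos : ∀ i, 0 < d i := fun i => hB.eigenvalues_pos i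
  have cancel₁ : ∀ X : Matrix (Fin p) (Fin p) ℝ, star U * (U * X) = X := fun X => by
    rw [← Matrix.mul_assoc, hU'U, Matrix.one_mul]
  have cancel₂ : ∀ X : Matrix (Fin p) (Fin p) ℝ, U * (star U * X) = X := fun X => by
    rw [← Matrix.mul_assoc, hUU, Matrix.one_mul]
  have hdd : Matrix.diagonal (RCLike.ofReal ∘ d) = Matrix.diagonal d := by congr 1
  have cancelD : ∀ X : Matrix (Fin p) (Fin p) ℝ,
      Matrix.diagonal d * (Matrix.diagonal e * X) = X := fun X => by
    rw [← Matrix.mul_assoc, Matrix.diagonal_mul_diagonal]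
    have h1 : (fun i => d i * e i) = fun _ => (1:ℝ) :=
      funext fun i => mul_inv_cancel₀ (hdpos i).ne'
    rw [h1, Matrix.diagonal_one, Matrix.one_mul]
  have hBinv : B⁻¹ = U * Matrix.diagonal e * star U := by
    apply Matrix.inv_eq_right_inv
    conv_lhs => rw [hB.1.spectral_theorem, Unitary.conjStarAlgAut_apply, hdd]
    change U * Matrix.diagonal d * star U * (U * Matrix.diagonal e * star U) = 1
    simp only [Matrix.mul_assoc, cancel₁, cancelD]
    exact hUU
  set C : Matrix (Fin p) (Fin p) ℝ := star U * Γ * U with hC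
  have hCt : Cᵀ = C := by
    rw [hC, hstar]
    simp only [Matrix.transpose_mul, Matrix.transpose_transpose, hΓt, Matrix.mul_assoc]
  have hAt : (U * Matrix.diagonal e * star U)ᵀ = U * Matrix.diagonal e * star U := by
    rw [hstar]
    simp only [Matrix.transpose_mul, Matrix.transpose_transpose, Matrix.diagonal_transpose,
      Matrix.mul_assoc]
  set A : Matrix (Fin p) (Fin p) ℝ := U * Matrix.diagonal e * star U with hA
  have hmat : (Cᵀ * Matrix.diagonal e) * (C * Matrix.diagonal e)
      = star U * (Γ * (A * Γ * A)) * U := by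
    rw [hCt, hC, hA]
    simp only [Matrix.mul_assoc, cancel₁, cancel₂, hU'U, Matrix.mul_one]
  have htr : Matrix.trace (Γᵀ * (B⁻¹ * Γ * B⁻¹ᵀ))
      = ∑ i, ∑ j, e i * e j * (C i j)^2 := by
    rw [hBinv, hAt, hΓt, ← trace_diag_form, hmat, Matrix.trace_mul_cycle, hUU, Matrix.one_mul]
  have hsum : ∑ i, ∑ j, (C i j)^2 = ∑ i, ∑ j, (Γ i j)^2 := by
    rw [sq_sum_eq_trace, sq_sum_eq_trace, hCt, hΓt]
    have hCC : C * C = star U * (Γ * Γ) * U := by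
      rw [hC]
      simp only [Matrix.mul_assoc, cancel₁, cancel₂]
    rw [hCC, Matrix.trace_mul_cycle, hUU, Matrix.one_mul]
  rw [kron_quad, htr, ← hsum, Finset.mul_sum]
  refine Finset.sum_le_sum fun i _ => ?_
  rw [Finset.mul_sum]
  refine Finset.sum_le_sum fun j _ => ?_
  have hei : ∀ k, β⁻¹ ≤ e k ∧ 0 < e k := fun k =>
    ⟨by rw [he]; exact inv_anti₀ (hdpos k) (hev k), inv_pos.mpr (hdpos k)⟩
  have h1 : β⁻¹ * β⁻¹ ≤ e i * e j :=
    mul_le_mul (hei i).1 (hei j).1 (inv_nonneg.mpr hβ.le) (hei i).2.le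
  exact mul_le_mul_of_nonneg_right h1 (sq_nonneg _)

end Aux3


/-- Lower bound for the log-det Taylor remainder:
`A ≥ ‖Γ‖_F² λ_min(Θ₁⁻¹)² / (2 (1 + λ_min(Θ₁⁻¹) ‖Γ‖₂)²)`. -/
theorem stmt12 {p : ℕ} (hp : 0 < p) (Θ₁ Γ : Matrix (Fin p) (Fin p) ℝ)
    (h₁ : Θ₁.PosDef) (hΓ : Γ.IsHermitian)
    (hsmall : opNorm Γ < lamMin hp h₁.isHermitian)
    (hinv : (Θ₁⁻¹).IsHermitian) :
    frobNorm Γ ^ 2 * (lamMin hp hinv) ^ 2 /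
        (2 * (1 + lamMin hp hinv * opNorm Γ) ^ 2) ≤
      kronQuadForm Θ₁ Γ := by

  classical
  set x : Fin p × Fin p → ℝ := fun ij => Γ ij.1 ij.2 with hx
  set S : ℝ := ∑ i, ∑ j, (Γ i j)^2 with hSdef
  have hS0 : 0 ≤ S := Finset.sum_nonneg fun i _ => Finset.sum_nonneg fun j _ => sq_nonneg _
  set m : ℝ := lamMin hp hinv with hm
  have hm0 : 0 < m := by
    rw [hm, lamMin]
    apply Finset.lt_inf'_iff _ |>.mpr
    intro i _
    exact h₁.inv.eigenvalues_pos i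
  set op : ℝ := opNorm Γ with hopdef
  have hop0 : 0 ≤ op := norm_nonneg _
  set β : ℝ := m⁻¹ + op with hβdef
  have hβ : 0 < β := by positivity
  have hΓt : Γᵀ = Γ := aux_herm_transpose hΓ
  have hΓop : ∀ y : Fin p → ℝ, |y ⬝ᵥ Γ *ᵥ y| ≤ op * (y ⬝ᵥ y) := fun y =>
    abs_quad_le_opNorm Γ y
  -- hermitian-ness of the pencil
  have hBh : ∀ v : ℝ, (Θ₁ + v • Γ).IsHermitian := by
    intro v
    have h2 : (v • Γ).IsHermitian := by
      show (v • Γ)ᴴ = v • Γ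
      rw [Matrix.conjTranspose_smul, star_trivial, hΓ]
    exact h₁.isHermitian.add h2
  -- quadratic form splitting
  have hsplit : ∀ (v : ℝ) (y : Fin p → ℝ),
      y ⬝ᵥ (Θ₁ + v • Γ) *ᵥ y = y ⬝ᵥ Θ₁ *ᵥ y + v * (y ⬝ᵥ Γ *ᵥ y) := by
    intro v y
    rw [Matrix.add_mulVec, dotProduct_add, Matrix.smul_mulVec,
      dotProduct_smul, smul_eq_mul]
  -- positive definiteness on [0,1]
  have hPD : ∀ v ∈ Set.Icc (0:ℝ) 1, (Θ₁ + v • Γ).PosDef := by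
    intro v hv
    refine Matrix.posDef_iff_dotProduct_mulVec.mpr ⟨hBh v, fun y hy => ?_⟩
    rw [star_trivial, hsplit v y]
    have h1 : lamMin hp h₁.isHermitian * (y ⬝ᵥ y) ≤ y ⬝ᵥ Θ₁ *ᵥ y :=
      aux_quad_ge Θ₁ h₁.isHermitian y fun i => Finset.inf'_le _ (Finset.mem_univ i)
    have h2 : |y ⬝ᵥ Γ *ᵥ y| ≤ op * (y ⬝ᵥ y) := hΓop y
    have hyy : 0 < y ⬝ᵥ y := by
      rcases (aux_xx_nonneg y).eq_or_lt with h | h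
      · exact absurd (dotProduct_self_eq_zero.mp h.symm) hy
      · exact h
    have habs := abs_le.mp h2
    nlinarith [hsmall, hv.1, hv.2, mul_le_mul_of_nonneg_left hv.2 (abs_nonneg (y ⬝ᵥ Γ *ᵥ y))]
  -- quadratic form upper bound on [0,1]
  have hqle : ∀ v ∈ Set.Icc (0:ℝ) 1, ∀ y : Fin p → ℝ,
      y ⬝ᵥ (Θ₁ + v • Γ) *ᵥ y ≤ β * (y ⬝ᵥ y) := by
    intro v hv y
    rw [hsplit v y, hβdef, add_mul]
    have h1 : y ⬝ᵥ Θ₁ *ᵥ y ≤ m⁻¹ * (y ⬝ᵥ y) := aux_inv_bound hp Θ₁ h₁ hinv y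
    have h2 := abs_le.mp (hΓop y)
    have hyy := aux_xx_nonneg y
    nlinarith [hv.1, hv.2, h2.2, mul_le_mul_of_nonneg_left hv.2 (abs_nonneg (y ⬝ᵥ Γ *ᵥ y)),
      abs_le.mp (hΓop y)]
  -- pointwise lower bound of the integrand
  have hlow : ∀ v ∈ Set.Icc (0:ℝ) 1,
      (1 - v) * (β⁻¹ * β⁻¹ * S) ≤ (1 - v) *
        (x ⬝ᵥ (((Θ₁ + v • Γ)⁻¹ ⊗ₖ (Θ₁ + v • Γ)⁻¹).mulVec x)) := by
    intro v hv
    have hpd := hPD v hv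
    have hev : ∀ i, hpd.1.eigenvalues i ≤ β :=
      aux_eigen_le _ hpd.1 (hqle v hv)
    have hk := key_ineq (Θ₁ + v • Γ) Γ hpd hΓt hβ hev
    exact mul_le_mul_of_nonneg_left hk (by linarith [hv.2])
  -- continuity of the integrand
  set f : ℝ → ℝ := fun v => (1 - v) *
      (x ⬝ᵥ (((Θ₁ + v • Γ)⁻¹ ⊗ₖ (Θ₁ + v • Γ)⁻¹).mulVec x)) with hfdef
  have hBc : Continuous fun v : ℝ => Θ₁ + v • Γ :=
    continuous_const.add (continuous_id.smul continuous_const)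
  have hdetne : ∀ v ∈ Set.Icc (0:ℝ) 1, (Θ₁ + v • Γ).det ≠ 0 := fun v hv =>
    (hPD v hv).det_pos.ne'
  have hfeq : f = fun v => (1 - v) * ∑ a : Fin p × Fin p, x a * ∑ b : Fin p × Fin p,
      ((Θ₁ + v • Γ).det⁻¹ * (Θ₁ + v • Γ).adjugate a.1 b.1) *
        ((Θ₁ + v • Γ).det⁻¹ * (Θ₁ + v • Γ).adjugate a.2 b.2) * x b := by
    funext v
    show (1 - v) * (x ⬝ᵥ (((Θ₁ + v • Γ)⁻¹ ⊗ₖ (Θ₁ + v • Γ)⁻¹).mulVec x)) = _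
    have hi : (Θ₁ + v • Γ)⁻¹ = (Θ₁ + v • Γ).det⁻¹ • (Θ₁ + v • Γ).adjugate := by
      rw [Matrix.inv_def, Ring.inverse_eq_inv']
    rw [hi]
    simp only [dotProduct, Matrix.mulVec, Matrix.kroneckerMap_apply,
      Matrix.smul_apply, smul_eq_mul]
  have hfc : ContinuousOn f (Set.Icc (0:ℝ) 1) := by
    rw [hfeq]
    have hdetc : ContinuousOn (fun v : ℝ => (Θ₁ + v • Γ).det⁻¹) (Set.Icc (0:ℝ) 1) :=
      (hBc.matrix_det.continuousOn).inv₀ hdetne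
    have hadj : Continuous fun v : ℝ => (Θ₁ + v • Γ).adjugate := hBc.matrix_adjugate
    refine ContinuousOn.mul ((continuous_const.sub continuous_id).continuousOn) ?_
    refine continuousOn_finset_sum _ fun a _ => ContinuousOn.mul continuousOn_const ?_
    refine continuousOn_finset_sum _ fun b _ => ?_
    exact ((hdetc.mul (hadj.matrix_elem a.1 b.1).continuousOn).mul
      (hdetc.mul (hadj.matrix_elem a.2 b.2).continuousOn)).mul continuousOn_const
  have hIntf : IntervalIntegrable f MeasureTheory.volume 0 1 := by
    apply ContinuousOn.intervalIntegrable
    rwa [Set.uIcc_of_le (by norm_num : (0:ℝ) ≤ 1)]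
  have hIntg : IntervalIntegrable (fun v : ℝ => (1 - v) * (β⁻¹ * β⁻¹ * S))
      MeasureTheory.volume 0 1 :=
    ((continuous_const.sub continuous_id).mul continuous_const).intervalIntegrable 0 1
  have hmono : (∫ v in (0:ℝ)..1, (1 - v) * (β⁻¹ * β⁻¹ * S)) ≤ ∫ v in (0:ℝ)..1, f v :=
    intervalIntegral.integral_mono_on zero_le_one hIntg hIntf hlow
  have hgval : (∫ v in (0:ℝ)..1, (1 - v) * (β⁻¹ * β⁻¹ * S)) = β⁻¹ * β⁻¹ * S / 2 := by
    rw [intervalIntegral.integral_mul_const,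
      intervalIntegral.integral_sub intervalIntegrable_const intervalIntegral.intervalIntegrable_id,
      intervalIntegral.integral_const, integral_id]
    norm_num
    ring
  have hkq : kronQuadForm Θ₁ Γ = ∫ v in (0:ℝ)..1, f v := by
    rw [kronQuadForm]
  have hfrob : frobNorm Γ ^ 2 = S := by
    rw [frobNorm, Real.sq_sqrt hS0]
  have h1m : 1 + m * op = m * β := by
    rw [hβdef]; field_simp
  rw [hkq, hfrob, h1m]
  have hrhs : S * m ^ 2 / (2 * (m * β) ^ 2) = β⁻¹ * β⁻¹ * S / 2 := by
    field_simp
  rw [hrhs]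
  rw [← hgval]
  exact hmono
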